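/- For every odd prime power q, the cardinalities of the 𝔽_q-rational point sets satisfy |Z(𝔽_q)| = (q − 1)·|F(𝔽_q)| + 2q + 2. -/

import Mathlib

open scoped LinearAlgebra.Projectivization
open Projectivization

/-- The Fermat quartic condition on `ℙ³`: `z₀⁴ - z₁⁴ + z₂⁴ - z₃⁴ = 0`. -/
def FermatCond {F : Type*} [Field F] (z : Fin 4 → F) : Prop :=
  z 0 ^ 4 - z 1 ^ 4 + z 2 ^ 4 - z 3 ^ 4 = 0

/-- The defining condition of the Satake model `Z ⊂ ℙ⁷` in coordinates
`[Y₀ : Y₁ : Y₂ : Y₃ : X₀ : X₁ : X₂ : X₃] = [v 0 : ⋯ : v 7]`. -/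
def SatakeCond {F : Type*} [Field F] (v : Fin 8 → F) : Prop :=
  v 0 ^ 2 = 2 * (v 4 * v 7 + v 5 * v 6) ∧
  v 1 ^ 2 = 2 * (v 4 * v 7 - v 5 * v 6) ∧
  v 2 ^ 2 = 2 * (v 4 * v 6 - v 5 * v 7) ∧
  v 3 ^ 2 = 2 * (v 4 * v 6 + v 5 * v 7)

section Aux

variable {F : Type*} [Field F]

/-- The abstract bilinear system governing the fibers of `Z → ℙ³`. -/
def Sol (A B C D : F) (x : Fin 4 → F) : Prop :=
  x 0 * x 3 = A ∧ x 1 * x 2 = B ∧ x 0 * x 2 = C ∧ x 1 * x 3 = D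

/-- A torus action preserving the bilinear system. -/
def act (t : Fˣ) (x : Fin 4 → F) : Fin 4 → F :=
  ![(t : F) * x 0, (t : F) * x 1, (t : F)⁻¹ * x 2, (t : F)⁻¹ * x 3]

lemma sol_act {A B C D : F} (t : Fˣ) {x : Fin 4 → F} (h : Sol A B C D x) :
    Sol A B C D (act t x) := by
  obtain ⟨h1, h2, h3, h4⟩ := h
  have ht : (t : F) ≠ 0 := t.ne_zero
  refine ⟨?_, ?_, ?_, ?_⟩ <;> simp only [act, Matrix.cons_val_zero, Matrix.cons_val_one,
    Matrix.head_cons, Matrix.cons_val_two, Matrix.tail_cons, Matrix.cons_val_three] <;>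
    field_simp <;>
    first
      | linear_combination (t : F) * h1
      | linear_combination (t : F) * h2
      | linear_combination (t : F) * h3
      | linear_combination (t : F) * h4
      | linear_combination h1
      | linear_combination h2
      | linear_combination h3
      | linear_combination h4

lemma sol_exists {A B C D : F} (h : A * B = C * D) (hne : ¬(A = 0 ∧ B = 0 ∧ C = 0 ∧ D = 0)) :
    ∃ x : Fin 4 → F, Sol A B C D x := by
  by_cases hA : A ≠ 0
  · refine ⟨![1, D / A, C, A], ?_, ?_, ?_, ?_⟩ <;>
      simp only [Matrix.cons_val_zero, Matrix.cons_val_one, Matrix.head_cons,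
        Matrix.cons_val_two, Matrix.tail_cons, Matrix.cons_val_three] <;>
      field_simp <;> first | linear_combination h | linear_combination 2*h | linear_combination -h | linear_combination -2*h
  push_neg at hA
  by_cases hB : B ≠ 0
  · refine ⟨![C / B, 1, B, D], ?_, ?_, ?_, ?_⟩ <;>
      simp only [Matrix.cons_val_zero, Matrix.cons_val_one, Matrix.head_cons,
        Matrix.cons_val_two, Matrix.tail_cons, Matrix.cons_val_three] <;>
      field_simp <;> first | linear_combination h | linear_combination 2*h | linear_combination -h | linear_combination -2*h
  push_neg at hB
  have hCD : C * D = 0 := by rw [← h, hA, hB]; ring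
  by_cases hC : C ≠ 0
  · have hD : D = 0 := by rcases mul_eq_zero.mp hCD with h' | h'; exact absurd h' hC; exact h'
    exact ⟨![1, 0, C, 0], by simp [Sol, hA, hB, hD]⟩
  push_neg at hC
  have hD : D ≠ 0 := fun hD => hne ⟨hA, hB, hC, hD⟩
  exact ⟨![0, 1, 0, D], by simp [Sol, hA, hB, hC]⟩

lemma sol_empty {A B C D : F} (h : A * B ≠ C * D) (x : Fin 4 → F) : ¬ Sol A B C D x := by
  rintro ⟨h1, h2, h3, h4⟩
  exact h (by rw [← h1, ← h2, ← h3, ← h4]; ring)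

lemma sol_trans {A B C D : F} (hne : ¬(A = 0 ∧ B = 0 ∧ C = 0 ∧ D = 0))
    {x x' : Fin 4 → F} (hx : Sol A B C D x) (hx' : Sol A B C D x') :
    ∃ t : Fˣ, x' = act t x := by
  obtain ⟨h1, h2, h3, h4⟩ := hx
  obtain ⟨h1', h2', h3', h4'⟩ := hx'
  have ext4 : ∀ z w : Fin 4 → F, z 0 = w 0 → z 1 = w 1 → z 2 = w 2 → z 3 = w 3 → z = w := by
    intro z w e0 e1 e2 e3; funext i; fin_cases i <;> assumption
  by_cases hA : A ≠ 0
  · have hx0 : x 0 ≠ 0 := fun h => hA (by rw [← h1, h]; ring)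
    have hx3 : x 3 ≠ 0 := fun h => hA (by rw [← h1, h]; ring)
    have hx0' : x' 0 ≠ 0 := fun h => hA (by rw [← h1', h]; ring)
    have hx3' : x' 3 ≠ 0 := fun h => hA (by rw [← h1', h]; ring)
    have e : x 1 * x 3 = x' 1 * x' 3 := by rw [h4, h4']
    have e2 : x 0 * x 3 = x' 0 * x' 3 := by rw [h1, h1']
    refine ⟨Units.mk0 (x' 0 / x 0) (div_ne_zero hx0' hx0), ext4 _ _ ?_ ?_ ?_ ?_⟩
    · show x' 0 = x' 0 / x 0 * x 0; field_simp
    · show x' 1 = x' 0 / x 0 * x 1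
      field_simp
      apply mul_left_cancel₀ hx3'
      linear_combination x 1 * e2 - x 0 * e
    · show x' 2 = (x' 0 / x 0 : F)⁻¹ * x 2
      field_simp
      linear_combination h3' - h3
    · show x' 3 = (x' 0 / x 0 : F)⁻¹ * x 3
      field_simp
      linear_combination h1' - h1
  push_neg at hA
  by_cases hB : B ≠ 0
  · have hx1 : x 1 ≠ 0 := fun h => hB (by rw [← h2, h]; ring)
    have hx2 : x 2 ≠ 0 := fun h => hB (by rw [← h2, h]; ring)
    have hx1' : x' 1 ≠ 0 := fun h => hB (by rw [← h2', h]; ring)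
    have hx2' : x' 2 ≠ 0 := fun h => hB (by rw [← h2', h]; ring)
    have e : x 1 * x 2 = x' 1 * x' 2 := by rw [h2, h2']
    have e2 : x 0 * x 2 = x' 0 * x' 2 := by rw [h3, h3']
    refine ⟨Units.mk0 (x' 1 / x 1) (div_ne_zero hx1' hx1), ext4 _ _ ?_ ?_ ?_ ?_⟩
    · show x' 0 = x' 1 / x 1 * x 0
      field_simp
      apply mul_left_cancel₀ hx2'
      linear_combination x 0 * e - x 1 * e2
    · show x' 1 = x' 1 / x 1 * x 1; field_simp
    · show x' 2 = (x' 1 / x 1 : F)⁻¹ * x 2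
      field_simp
      linear_combination h2' - h2
    · show x' 3 = (x' 1 / x 1 : F)⁻¹ * x 3
      field_simp
      linear_combination h4' - h4
  push_neg at hB
  by_cases hC : C ≠ 0
  · have hx0 : x 0 ≠ 0 := fun h => hC (by rw [← h3, h]; ring)
    have hx2 : x 2 ≠ 0 := fun h => hC (by rw [← h3, h]; ring)
    have hx0' : x' 0 ≠ 0 := fun h => hC (by rw [← h3', h]; ring)
    have hx2' : x' 2 ≠ 0 := fun h => hC (by rw [← h3', h]; ring)
    have e : x 1 * x 2 = x' 1 * x' 2 := by rw [h2, h2']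
    have e2 : x 0 * x 2 = x' 0 * x' 2 := by rw [h3, h3']
    refine ⟨Units.mk0 (x' 0 / x 0) (div_ne_zero hx0' hx0), ext4 _ _ ?_ ?_ ?_ ?_⟩
    · show x' 0 = x' 0 / x 0 * x 0; field_simp
    · show x' 1 = x' 0 / x 0 * x 1
      field_simp
      apply mul_left_cancel₀ hx2'
      linear_combination x 1 * e2 - x 0 * e
    · show x' 2 = (x' 0 / x 0 : F)⁻¹ * x 2
      field_simp
      linear_combination h3' - h3
    · show x' 3 = (x' 0 / x 0 : F)⁻¹ * x 3
      field_simp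
      linear_combination h1' - h1
  push_neg at hC
  by_cases hD : D ≠ 0
  · have hx1 : x 1 ≠ 0 := fun h => hD (by rw [← h4, h]; ring)
    have hx3 : x 3 ≠ 0 := fun h => hD (by rw [← h4, h]; ring)
    have hx1' : x' 1 ≠ 0 := fun h => hD (by rw [← h4', h]; ring)
    have hx3' : x' 3 ≠ 0 := fun h => hD (by rw [← h4', h]; ring)
    have e : x 1 * x 3 = x' 1 * x' 3 := by rw [h4, h4']
    have e2 : x 0 * x 3 = x' 0 * x' 3 := by rw [h1, h1']
    refine ⟨Units.mk0 (x' 1 / x 1) (div_ne_zero hx1' hx1), ext4 _ _ ?_ ?_ ?_ ?_⟩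
    · show x' 0 = x' 1 / x 1 * x 0
      field_simp
      apply mul_left_cancel₀ hx3'
      linear_combination x 0 * e - x 1 * e2
    · show x' 1 = x' 1 / x 1 * x 1; field_simp
    · show x' 2 = (x' 1 / x 1 : F)⁻¹ * x 2
      field_simp
      linear_combination h2' - h2
    · show x' 3 = (x' 1 / x 1 : F)⁻¹ * x 3
      field_simp
      linear_combination h4' - h4
  push_neg at hD
  exact absurd ⟨hA, hB, hC, hD⟩ hne

lemma sol_card [Fintype F] {A B C D : F} (h : A * B = C * D)
    (hne : ¬(A = 0 ∧ B = 0 ∧ C = 0 ∧ D = 0)) :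
    Nat.card {x : Fin 4 → F // Sol A B C D x} = Fintype.card F - 1 := by
  classical
  obtain ⟨x₀, hx₀⟩ := sol_exists h hne
  have hbij : Function.Bijective (fun t : Fˣ => (⟨act t x₀, sol_act t hx₀⟩ :
      {x : Fin 4 → F // Sol A B C D x})) := by
    constructor
    · intro t s hts
      have hts' : act t x₀ = act s x₀ := congrArg Subtype.val hts
      -- some coordinate of x₀ in position 0 or 1 is nonzero
      have hkey : x₀ 0 ≠ 0 ∨ x₀ 1 ≠ 0 := by
        obtain ⟨h1, h2, h3, h4⟩ := hx₀
        by_contra hcon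
        push_neg at hcon
        obtain ⟨e0, e1⟩ := hcon
        exact hne ⟨by rw [← h1, e0]; ring, by rw [← h2, e1]; ring,
          by rw [← h3, e0]; ring, by rw [← h4, e1]; ring⟩
      rcases hkey with hk | hk
      · have := congrFun hts' 0
        simp only [act, Matrix.cons_val_zero] at this
        exact Units.ext (mul_right_cancel₀ hk this)
      · have := congrFun hts' 1
        simp only [act, Matrix.cons_val_one, Matrix.head_cons] at this
        exact Units.ext (mul_right_cancel₀ hk this)
    · rintro ⟨x, hx⟩
      obtain ⟨t, ht⟩ := sol_trans hne hx₀ hx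
      exact ⟨t, by simp [ht]⟩
  calc Nat.card {x : Fin 4 → F // Sol A B C D x}
      = Nat.card Fˣ := (Nat.card_congr (Equiv.ofBijective _ hbij)).symm
    _ = Fintype.card F - 1 := by rw [Nat.card_eq_fintype_card, Fintype.card_units]

lemma proj_count {V : Type*} [AddCommGroup V] [Module F V] [NoZeroSMulDivisors F V]
    (C : V → Prop) (hC : ∀ (t : F), t ≠ 0 → ∀ v, C v → C (t • v)) :
    Nat.card {v : V // v ≠ 0 ∧ C v} = Nat.card {p : ℙ F V // C p.rep} * Nat.card Fˣ := by
  have hbij : Function.Bijective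
      (fun pt : {p : ℙ F V // C p.rep} × Fˣ =>
        (⟨(pt.2 : F) • pt.1.1.rep,
          smul_ne_zero pt.2.ne_zero (rep_nonzero pt.1.1),
          hC _ pt.2.ne_zero _ pt.1.2⟩ : {v : V // v ≠ 0 ∧ C v})) := by
    constructor
    · rintro ⟨⟨p, hp⟩, t⟩ ⟨⟨p', hp'⟩, s⟩ hts
      have hts' : (t : F) • p.rep = (s : F) • p'.rep := congrArg Subtype.val hts
      have hmk : ∀ (u : Fˣ) (q : ℙ F V),
          Projectivization.mk F ((u : F) • q.rep)
            (smul_ne_zero u.ne_zero (rep_nonzero q)) = q := by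
        intro u q
        conv_rhs => rw [← Projectivization.mk_rep q]
        exact (mk_eq_mk_iff F _ _ _ (rep_nonzero q)).2 ⟨u, by simp [Units.smul_def]⟩
      have hpp : p = p' := by
        rw [← hmk t p, ← hmk s p']
        exact (mk_eq_mk_iff F _ _ _ _).2 ⟨1, by simp [hts']⟩
      subst hpp
      have : (t : F) = (s : F) := smul_left_injective F (rep_nonzero p) hts'
      simp only [Prod.mk.injEq, Subtype.mk.injEq]
      exact ⟨trivial, Units.ext this⟩
    · rintro ⟨v, hv, hCv⟩
      obtain ⟨a, ha⟩ := exists_smul_eq_mk_rep F v hv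
      have hCrep : C (Projectivization.mk F v hv).rep := by
        rw [← ha, Units.smul_def]
        exact hC _ a.ne_zero _ hCv
      refine ⟨⟨⟨Projectivization.mk F v hv, hCrep⟩, a⁻¹⟩, ?_⟩
      ext
      simp only
      rw [← ha, Units.smul_def, smul_smul]
      simp
  rw [← Nat.card_prod]
  exact (Nat.card_congr (Equiv.ofBijective _ hbij)).symm

/-- glue two 4-vectors into an 8-vector -/
def glue (y x : Fin 4 → F) : Fin 8 → F := ![y 0, y 1, y 2, y 3, x 0, x 1, x 2, x 3]

def splitEquiv : (Fin 8 → F) ≃ (Fin 4 → F) × (Fin 4 → F) where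
  toFun v := (![v 0, v 1, v 2, v 3], ![v 4, v 5, v 6, v 7])
  invFun p := glue p.1 p.2
  left_inv v := by funext i; fin_cases i <;> rfl
  right_inv p := by
    refine Prod.ext ?_ ?_ <;> funext i <;> fin_cases i <;> rfl

lemma glue_eq_zero {y x : Fin 4 → F} : glue y x = 0 ↔ y = 0 ∧ x = 0 := by
  constructor
  · intro h
    constructor <;> funext i <;> fin_cases i <;>
      first
        | exact congrFun h 0 | exact congrFun h 1 | exact congrFun h 2 | exact congrFun h 3
        | exact congrFun h 4 | exact congrFun h 5 | exact congrFun h 6 | exact congrFun h 7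
  · rintro ⟨hy, hx⟩
    funext i
    fin_cases i <;> simp [glue, hy, hx] <;> rfl

def AA (y : Fin 4 → F) : F := (y 0 ^ 2 + y 1 ^ 2) / 4
def BB (y : Fin 4 → F) : F := (y 0 ^ 2 - y 1 ^ 2) / 4
def CC (y : Fin 4 → F) : F := (y 2 ^ 2 + y 3 ^ 2) / 4
def DD (y : Fin 4 → F) : F := (y 3 ^ 2 - y 2 ^ 2) / 4

lemma satake_glue_iff (h4 : (4 : F) ≠ 0) (y x : Fin 4 → F) :
    SatakeCond (glue y x) ↔ Sol (AA y) (BB y) (CC y) (DD y) x := by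
  have e0 : glue y x 0 = y 0 := rfl
  have e1 : glue y x 1 = y 1 := rfl
  have e2 : glue y x 2 = y 2 := rfl
  have e3 : glue y x 3 = y 3 := rfl
  have e4 : glue y x 4 = x 0 := rfl
  have e5 : glue y x 5 = x 1 := rfl
  have e6 : glue y x 6 = x 2 := rfl
  have e7 : glue y x 7 = x 3 := rfl
  unfold SatakeCond Sol AA BB CC DD
  rw [e0, e1, e2, e3, e4, e5, e6, e7]
  constructor
  · rintro ⟨h1, h2, h3, h4'⟩
    refine ⟨?_, ?_, ?_, ?_⟩ <;> rw [eq_div_iff h4] <;>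
      first
        | linear_combination -h1 - h2
        | linear_combination h2 - h1
        | linear_combination -h3 - h4'
        | linear_combination h3 - h4'
  · rintro ⟨h1, h2, h3, h4'⟩
    rw [eq_div_iff h4] at h1 h2 h3 h4'
    refine ⟨?_, ?_, ?_, ?_⟩ <;> apply mul_left_cancel₀ h4 <;>
      first
        | linear_combination -2 * h1 - 2 * h2
        | linear_combination -2 * h1 + 2 * h2
        | linear_combination -2 * h3 + 2 * h4'
        | linear_combination -2 * h3 - 2 * h4'

lemma abcd_fermat (h4 : (4 : F) ≠ 0) (y : Fin 4 → F) :
    AA y * BB y = CC y * DD y ↔ FermatCond y := by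
  have hm : (4 : F) * 4 ≠ 0 := mul_ne_zero h4 h4
  unfold AA BB CC DD FermatCond
  rw [div_mul_div_comm, div_mul_div_comm, div_eq_div_iff hm hm]
  constructor
  · intro h
    apply mul_left_cancel₀ hm
    linear_combination h
  · intro h
    linear_combination (16 : F) * h

lemma abcd_ne_zero (h2 : (2 : F) ≠ 0) {y : Fin 4 → F} (hy : y ≠ 0) :
    ¬(AA y = 0 ∧ BB y = 0 ∧ CC y = 0 ∧ DD y = 0) := by
  have h4 : (4 : F) ≠ 0 := by
    have h44 : (4 : F) = 2 * 2 := by norm_num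
    rw [h44]; exact mul_ne_zero h2 h2
  rintro ⟨ha, hb, hc, hd⟩
  apply hy
  simp only [AA, BB, CC, DD] at ha hb hc hd
  rw [div_eq_zero_iff] at ha hb hc hd
  replace ha := ha.resolve_right h4
  replace hb := hb.resolve_right h4
  replace hc := hc.resolve_right h4
  replace hd := hd.resolve_right h4
  have e0 : 2 * y 0 ^ 2 = 0 := by linear_combination ha + hb
  have e1 : 2 * y 1 ^ 2 = 0 := by linear_combination ha - hb
  have e2 : 2 * y 2 ^ 2 = 0 := by linear_combination hc - hd
  have e3 : 2 * y 3 ^ 2 = 0 := by linear_combination hc + hd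
  replace e0 := (mul_eq_zero.mp e0).resolve_left h2
  replace e1 := (mul_eq_zero.mp e1).resolve_left h2
  replace e2 := (mul_eq_zero.mp e2).resolve_left h2
  replace e3 := (mul_eq_zero.mp e3).resolve_left h2
  funext i
  fin_cases i <;>
    first
      | exact pow_eq_zero_iff (two_ne_zero) |>.mp e0
      | exact pow_eq_zero_iff (two_ne_zero) |>.mp e1
      | exact pow_eq_zero_iff (two_ne_zero) |>.mp e2
      | exact pow_eq_zero_iff (two_ne_zero) |>.mp e3

lemma card_pair_ne [Fintype F] : Nat.card {v : F × F // v ≠ 0} = Fintype.card F ^ 2 - 1 := by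
  classical
  rw [Nat.card_eq_fintype_card]
  have : Fintype.card {v : F × F // v ≠ 0} = Fintype.card (F × F) - Fintype.card {v : F × F // v = 0} :=
    Fintype.card_subtype_compl _
  rw [this, Fintype.card_subtype_eq, Fintype.card_prod, sq]

lemma sol_zero_card [Fintype F] :
    Nat.card {x : Fin 4 → F // x ≠ 0 ∧ Sol 0 0 0 0 x} = 2 * (Fintype.card F ^ 2 - 1) := by
  classical
  have hto : ∀ v : {v : F × F // v ≠ 0},
      (![v.1.1, v.1.2, 0, 0] : Fin 4 → F) ≠ 0 ∧ Sol 0 0 0 0 ![v.1.1, v.1.2, 0, 0] := by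
    rintro ⟨⟨a, b⟩, hv⟩
    refine ⟨fun h => hv ?_, by simp [Sol]⟩
    have ha := congrFun h 0
    have hb := congrFun h 1
    simp at ha hb
    simp [Prod.ext_iff, ha, hb]
  have hto' : ∀ v : {v : F × F // v ≠ 0},
      (![0, 0, v.1.1, v.1.2] : Fin 4 → F) ≠ 0 ∧ Sol 0 0 0 0 ![0, 0, v.1.1, v.1.2] := by
    rintro ⟨⟨a, b⟩, hv⟩
    refine ⟨fun h => hv ?_, by simp [Sol]⟩
    have ha := congrFun h 2
    have hb := congrFun h 3
    simp at ha hb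
    simp [Prod.ext_iff, ha, hb]
  have hbij : Function.Bijective
      (fun w : {v : F × F // v ≠ 0} ⊕ {v : F × F // v ≠ 0} =>
        (Sum.rec (fun v => ⟨![v.1.1, v.1.2, 0, 0], hto v⟩)
          (fun v => ⟨![0, 0, v.1.1, v.1.2], hto' v⟩) w :
          {x : Fin 4 → F // x ≠ 0 ∧ Sol 0 0 0 0 x})) := by
    constructor
    · rintro (⟨⟨a, b⟩, hv⟩ | ⟨⟨a, b⟩, hv⟩) (⟨⟨a', b'⟩, hv'⟩ | ⟨⟨a', b'⟩, hv'⟩) h <;>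
        simp only [Subtype.mk.injEq] at h
      · have h0 := congrFun h 0; have h1 := congrFun h 1
        simp at h0 h1
        simp [h0, h1]
      · exfalso
        have h0 := congrFun h 0; have h1 := congrFun h 1
        simp at h0 h1
        exact hv (by simp [Prod.ext_iff, h0, h1])
      · exfalso
        have h0 := congrFun h 0; have h1 := congrFun h 1
        simp at h0 h1
        exact hv' (by simp [Prod.ext_iff, ← h0, ← h1])
      · have h2 := congrFun h 2; have h3 := congrFun h 3
        simp at h2 h3
        simp [h2, h3]
    · rintro ⟨x, hx, h03, h12, h02, h13⟩
      by_cases h0 : x 0 ≠ 0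
      · have hx3 : x 3 = 0 := by rcases mul_eq_zero.mp h03 with h | h; exact absurd h h0; exact h
        have hx2 : x 2 = 0 := by rcases mul_eq_zero.mp h02 with h | h; exact absurd h h0; exact h
        refine ⟨Sum.inl ⟨(x 0, x 1), by simp [Prod.ext_iff, h0]⟩, ?_⟩
        simp only [Subtype.mk.injEq]
        funext i; fin_cases i <;> simp [hx2, hx3]
      push_neg at h0
      by_cases h1 : x 1 ≠ 0
      · have hx2 : x 2 = 0 := by rcases mul_eq_zero.mp h12 with h | h; exact absurd h h1; exact h
        have hx3 : x 3 = 0 := by rcases mul_eq_zero.mp h13 with h | h; exact absurd h h1; exact h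
        refine ⟨Sum.inl ⟨(x 0, x 1), by simp [Prod.ext_iff, h1]⟩, ?_⟩
        simp only [Subtype.mk.injEq]
        funext i; fin_cases i <;> simp [hx2, hx3]
      push_neg at h1
      have h23 : (x 2, x 3) ≠ 0 := by
        intro hc
        rw [Prod.ext_iff] at hc
        simp only [] at hc
        apply hx
        funext i; fin_cases i <;> simp [h0, h1] <;> [exact hc.1; exact hc.2]
      refine ⟨Sum.inr ⟨(x 2, x 3), h23⟩, ?_⟩
      simp only [Subtype.mk.injEq]
      funext i; fin_cases i <;> simp [h0, h1]
  calc Nat.card {x : Fin 4 → F // x ≠ 0 ∧ Sol 0 0 0 0 x}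
      = Nat.card ({v : F × F // v ≠ 0} ⊕ {v : F × F // v ≠ 0}) :=
        (Nat.card_congr (Equiv.ofBijective _ hbij)).symm
    _ = 2 * (Fintype.card F ^ 2 - 1) := by
        rw [Nat.card_sum, card_pair_ne]; ring

end Aux
section Main

variable {F : Type*} [Field F]

lemma satake_smul (t : F) (ht : t ≠ 0) (v : Fin 8 → F) (h : SatakeCond v) :
    SatakeCond (t • v) := by
  obtain ⟨h1, h2, h3, h4⟩ := h
  refine ⟨?_, ?_, ?_, ?_⟩ <;> simp only [Pi.smul_apply, smul_eq_mul] <;>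
    first
      | linear_combination t ^ 2 * h1
      | linear_combination t ^ 2 * h2
      | linear_combination t ^ 2 * h3
      | linear_combination t ^ 2 * h4

lemma fermat_smul (t : F) (ht : t ≠ 0) (z : Fin 4 → F) (h : FermatCond z) :
    FermatCond (t • z) := by
  unfold FermatCond at h ⊢
  simp only [Pi.smul_apply, smul_eq_mul]
  linear_combination t ^ 4 * h

/-- The fiber condition over `y`. -/
def Rcond (y x : Fin 4 → F) : Prop :=
  ¬(y = 0 ∧ x = 0) ∧ Sol (AA y) (BB y) (CC y) (DD y) x

def satakeSplit (h4 : (4 : F) ≠ 0) :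
    {v : Fin 8 → F // v ≠ 0 ∧ SatakeCond v} ≃
      {p : (Fin 4 → F) × (Fin 4 → F) // Rcond p.1 p.2} :=
  Equiv.subtypeEquiv splitEquiv (by
    intro v
    set y := (splitEquiv v).1 with hy
    set x := (splitEquiv v).2 with hx
    have hv : glue y x = v := splitEquiv.symm_apply_apply v
    rw [← hv]
    unfold Rcond
    rw [satake_glue_iff h4, ne_eq, glue_eq_zero])

open Classical in
lemma rcond_card [Fintype F] (h2 : (2 : F) ≠ 0) (h4 : (4 : F) ≠ 0) (y : Fin 4 → F) :
    Nat.card {x : Fin 4 → F // Rcond y x} =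
      if y = 0 then 2 * (Fintype.card F ^ 2 - 1)
      else if FermatCond y then Fintype.card F - 1 else 0 := by
  classical
  by_cases hy : y = 0
  · subst hy
    rw [if_pos rfl]
    have hAA : AA (0 : Fin 4 → F) = 0 := by simp [AA]
    have hBB : BB (0 : Fin 4 → F) = 0 := by simp [BB]
    have hCC : CC (0 : Fin 4 → F) = 0 := by simp [CC]
    have hDD : DD (0 : Fin 4 → F) = 0 := by simp [DD]
    rw [← sol_zero_card]
    apply Nat.card_congr
    apply Equiv.subtypeEquivRight
    intro x
    unfold Rcond
    rw [hAA, hBB, hCC, hDD]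
    simp
  · rw [if_neg hy]
    have hrw : Nat.card {x : Fin 4 → F // Rcond y x} =
        Nat.card {x : Fin 4 → F // Sol (AA y) (BB y) (CC y) (DD y) x} := by
      apply Nat.card_congr
      apply Equiv.subtypeEquivRight
      intro x
      unfold Rcond
      simp [hy]
    rw [hrw]
    by_cases hf : FermatCond y
    · rw [if_pos hf]
      exact sol_card ((abcd_fermat h4 y).mpr hf) (abcd_ne_zero h2 hy)
    · rw [if_neg hf]
      have hAB : AA y * BB y ≠ CC y * DD y := fun h => hf ((abcd_fermat h4 y).mp h)
      have : IsEmpty {x : Fin 4 → F // Sol (AA y) (BB y) (CC y) (DD y) x} :=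
        ⟨fun ⟨x, hx⟩ => sol_empty hAB x hx⟩
      exact Nat.card_of_isEmpty

lemma affine_satake [Fintype F] (h2 : (2 : F) ≠ 0) :
    Nat.card {v : Fin 8 → F // v ≠ 0 ∧ SatakeCond v} =
      2 * (Fintype.card F ^ 2 - 1) +
        Nat.card {z : Fin 4 → F // z ≠ 0 ∧ FermatCond z} * (Fintype.card F - 1) := by
  classical
  have h4 : (4 : F) ≠ 0 := by
    have h44 : (4 : F) = 2 * 2 := by norm_num
    rw [h44]; exact mul_ne_zero h2 h2
  rw [Nat.card_congr (satakeSplit h4),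
    Nat.card_congr (Equiv.subtypeProdEquivSigmaSubtype (Rcond (F := F))),
    Nat.card_eq_fintype_card, Fintype.card_sigma]
  have hcongr : ∀ y : Fin 4 → F, Fintype.card {x : Fin 4 → F // Rcond y x} =
      if y = 0 then 2 * (Fintype.card F ^ 2 - 1)
      else if FermatCond y then Fintype.card F - 1 else 0 := by
    intro y
    rw [← Nat.card_eq_fintype_card]
    exact rcond_card h2 h4 y
  rw [Finset.sum_congr rfl fun y _ => hcongr y]
  rw [← Finset.add_sum_erase _ _ (Finset.mem_univ (0 : Fin 4 → F)), if_pos rfl]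
  congr 1
  have hstep : ∀ y ∈ (Finset.univ : Finset (Fin 4 → F)).erase 0,
      (if y = 0 then 2 * (Fintype.card F ^ 2 - 1)
        else if FermatCond y then Fintype.card F - 1 else 0) =
      (if FermatCond y then Fintype.card F - 1 else 0) := by
    intro y hy
    rw [if_neg (Finset.mem_erase.mp hy).1]
  rw [Finset.sum_congr rfl hstep, Finset.sum_ite, Finset.sum_const, Finset.sum_const_zero,
    add_zero, smul_eq_mul]
  congr 1
  rw [Nat.card_eq_fintype_card, Fintype.card_subtype]
  congr 1
  ext z
  simp only [Finset.mem_filter, Finset.mem_univ, true_and, Finset.mem_erase]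
  tauto

end Main

/-- For every finite field `F` of odd cardinality `q`,
`|Z(𝔽_q)| = (q - 1)·|F(𝔽_q)| + 2q + 2`. -/
theorem satake_point_count (F : Type) [Field F] [Fintype F] (hodd : ringChar F ≠ 2) :
    (Nat.card {p : ℙ F (Fin 8 → F) // SatakeCond p.rep} : ℤ) =
      ((Fintype.card F : ℤ) - 1) * Nat.card {p : ℙ F (Fin 4 → F) // FermatCond p.rep} +
        2 * (Fintype.card F : ℤ) + 2 := by
  classical
  have h2 : (2 : F) ≠ 0 := Ring.two_ne_zero hodd
  have hq1 : 1 ≤ Fintype.card F := Fintype.card_pos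
  have hq2 : 2 ≤ Fintype.card F := Fintype.one_lt_card
  have hZ := proj_count (F := F) (SatakeCond (F := F)) satake_smul
  have hF := proj_count (F := F) (FermatCond (F := F)) fermat_smul
  have hk : Nat.card Fˣ = Fintype.card F - 1 := by
    rw [Nat.card_eq_fintype_card, Fintype.card_units]
  have haff := affine_satake (F := F) h2
  rw [hZ, hF, hk] at haff
  -- cast to ℤ
  set q : ℤ := (Fintype.card F : ℤ) with hqdef
  set NZ := Nat.card {p : ℙ F (Fin 8 → F) // SatakeCond p.rep} with hNZ
  set NF := Nat.card {p : ℙ F (Fin 4 → F) // FermatCond p.rep} with hNF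
  have hcast : (NZ : ℤ) * (q - 1) = 2 * (q ^ 2 - 1) + (NF : ℤ) * (q - 1) * (q - 1) := by
    have := congrArg (fun n : ℕ => (n : ℤ)) haff
    push_cast [Nat.cast_sub hq1, Nat.cast_sub (Nat.one_le_pow 2 _ hq1)] at this
    linarith [this]
  have hne : q - 1 ≠ 0 := by
    have h2q : (2 : ℤ) ≤ q := by rw [hqdef]; exact_mod_cast hq2
    omega
  apply mul_right_cancel₀ hne
  rw [hcast]
  ring
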